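/- Let σ₁ ≥ σ₂ ≥ ⋯ ≥ σ_n ≥ 0 be real numbers and let K ≥ 1 be an integer. Write n = Kp + q with integers p ≥ 0 and 0 ≤ q < K, and partition {1, …, n} into consecutive blocks I_i = {K(i−1)+1, …, Ki} for i = 1, …, p and I_{p+1} = {Kp+1, …, n}. Then ∑_{i=2}^{p+1} √(∑_{j∈I_i} σ_j²) ≤ (1/√K)·∑_{j=1}^{n} σ_j. -/

import Mathlib

lemma aux_block_sum (σ : ℕ → ℝ) (K p : ℕ) :
    ∑ m ∈ Finset.range p, ∑ j ∈ Finset.Icc (K*m+1) (K*(m+1)), σ j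
      = ∑ j ∈ Finset.Icc 1 (K*p), σ j := by
  induction p with
  | zero => simp
  | succ p ih =>
    rw [Finset.sum_range_succ, ih]
    have e1 : ∀ a b : ℕ, Finset.Icc (a+1) b = Finset.Ioc a b := by
      intro a b; rw [← Finset.Icc_add_one_left_eq_Ioc]
    have e0 : Finset.Icc 1 (K*p) = Finset.Ioc 0 (K*p) := e1 0 _
    rw [e0, e1, e1 0]
    exact Finset.sum_Ioc_consecutive _ (Nat.zero_le _) (by nlinarith)



/-- for a nonincreasing sequence σ₁ ≥ ⋯ ≥ σ_n ≥ 0 partitioned into consecutive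
blocks of size K (the last block possibly smaller, with n = Kp + q, 0 ≤ q < K), the sum over
all blocks except the first of the Euclidean norms of the blocks is at most (1/√K) times the
total sum. The i-th block is I_i = {K(i−1)+1, …, min(Ki, n)}. -/
theorem block_norm_sum_le (n K p q : ℕ) (hK : 1 ≤ K) (hn : n = K * p + q) (hq : q < K)
    (σ : ℕ → ℝ)
    (hnonneg : ∀ j, 1 ≤ j → j ≤ n → 0 ≤ σ j)
    (hmono : ∀ j k, 1 ≤ j → j ≤ k → k ≤ n → σ k ≤ σ j) :
    ∑ i ∈ Finset.Icc 2 (p + 1),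
        Real.sqrt (∑ j ∈ Finset.Icc (K * (i - 1) + 1) (min (K * i) n), (σ j) ^ 2)
      ≤ (1 / Real.sqrt K) * ∑ j ∈ Finset.Icc 1 n, σ j := by
  have hKp : K * p ≤ n := by omega
  have hsK : (0:ℝ) < Real.sqrt K := Real.sqrt_pos.mpr (by exact_mod_cast hK)
  have key : ∀ i ∈ Finset.Icc 2 (p+1),
      Real.sqrt (∑ j ∈ Finset.Icc (K * (i - 1) + 1) (min (K * i) n), (σ j) ^ 2)
        ≤ (1 / Real.sqrt K) * ∑ j ∈ Finset.Icc (K*(i-2)+1) (K*(i-1)), σ j := by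
    intro i hi
    rw [Finset.mem_Icc] at hi
    set a := K*(i-1) with ha
    have ha1 : 1 ≤ a := by
      have : 1 ≤ i - 1 := by omega
      calc 1 ≤ K * 1 := by omega
      _ ≤ a := Nat.mul_le_mul_left K this
    have han : a ≤ n := le_trans (Nat.mul_le_mul_left K (by omega : i - 1 ≤ p)) hKp
    have hσa : 0 ≤ σ a := hnonneg a ha1 han
    -- Step 1: sqrt of block ≤ sqrt K * σ a
    have step1 : Real.sqrt (∑ j ∈ Finset.Icc (a+1) (min (K*i) n), (σ j)^2)
        ≤ Real.sqrt K * σ a := by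
      have hsum : ∑ j ∈ Finset.Icc (a+1) (min (K*i) n), (σ j)^2 ≤ (K:ℝ) * (σ a)^2 := by
        have hb : ∀ j ∈ Finset.Icc (a+1) (min (K*i) n), (σ j)^2 ≤ (σ a)^2 := by
          intro j hj
          rw [Finset.mem_Icc] at hj
          have hjn : j ≤ n := le_trans hj.2 (min_le_right _ _)
          have h1j : 1 ≤ j := le_trans (by omega) hj.1
          have := hmono a j ha1 (by omega) hjn
          have h0 := hnonneg j h1j hjn
          nlinarith
        calc ∑ j ∈ Finset.Icc (a+1) (min (K*i) n), (σ j)^2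
            ≤ ∑ j ∈ Finset.Icc (a+1) (min (K*i) n), (σ a)^2 := Finset.sum_le_sum hb
          _ = ((Finset.Icc (a+1) (min (K*i) n)).card : ℝ) * (σ a)^2 := by
              rw [Finset.sum_const, nsmul_eq_mul]
          _ ≤ (K:ℝ) * (σ a)^2 := by
              apply mul_le_mul_of_nonneg_right _ (sq_nonneg _)
              have : (Finset.Icc (a+1) (min (K*i) n)).card ≤ K := by
                rw [Nat.card_Icc]
                have : min (K*i) n ≤ K*i := min_le_left _ _
                have : K * i = K * (i-1) + K := by
                  rw [← Nat.mul_succ]; congr 1; omega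
                omega
              exact_mod_cast this
      calc Real.sqrt (∑ j ∈ Finset.Icc (a+1) (min (K*i) n), (σ j)^2)
          ≤ Real.sqrt ((K:ℝ) * (σ a)^2) := Real.sqrt_le_sqrt hsum
        _ = Real.sqrt K * σ a := by
            rw [Real.sqrt_mul (by positivity), Real.sqrt_sq hσa]
    -- Step 2: K * σ a ≤ sum over previous block
    have step2 : (K:ℝ) * σ a ≤ ∑ j ∈ Finset.Icc (K*(i-2)+1) a, σ j := by
      have hcard : (Finset.Icc (K*(i-2)+1) a).card = K := by
        rw [Nat.card_Icc]
        have : a = K*(i-2) + K := by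
          rw [ha, ← Nat.mul_succ]; congr 1; omega
        omega
      have hb : ∀ j ∈ Finset.Icc (K*(i-2)+1) a, σ a ≤ σ j := by
        intro j hj
        rw [Finset.mem_Icc] at hj
        exact hmono j a (by omega) hj.2 han
      calc (K:ℝ) * σ a = ((Finset.Icc (K*(i-2)+1) a).card : ℝ) * σ a := by rw [hcard]
        _ = ∑ j ∈ Finset.Icc (K*(i-2)+1) a, σ a := by rw [Finset.sum_const, nsmul_eq_mul]
        _ ≤ ∑ j ∈ Finset.Icc (K*(i-2)+1) a, σ j := Finset.sum_le_sum hb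
    calc Real.sqrt (∑ j ∈ Finset.Icc (a+1) (min (K*i) n), (σ j)^2)
        ≤ Real.sqrt K * σ a := step1
      _ = (1 / Real.sqrt K) * ((K:ℝ) * σ a) := by
          have hKK : Real.sqrt K * Real.sqrt K = (K:ℝ) :=
            Real.mul_self_sqrt (by positivity)
          field_simp
          linear_combination σ a * hKK
      _ ≤ (1 / Real.sqrt K) * ∑ j ∈ Finset.Icc (K*(i-2)+1) a, σ j := by
          apply mul_le_mul_of_nonneg_left step2 (by positivity)
  calc ∑ i ∈ Finset.Icc 2 (p + 1),
        Real.sqrt (∑ j ∈ Finset.Icc (K * (i - 1) + 1) (min (K * i) n), (σ j) ^ 2)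
      ≤ ∑ i ∈ Finset.Icc 2 (p+1), (1 / Real.sqrt K) * ∑ j ∈ Finset.Icc (K*(i-2)+1) (K*(i-1)), σ j :=
        Finset.sum_le_sum key
    _ = (1 / Real.sqrt K) * ∑ i ∈ Finset.Icc 2 (p+1), ∑ j ∈ Finset.Icc (K*(i-2)+1) (K*(i-1)), σ j := by
        rw [Finset.mul_sum]
    _ ≤ (1 / Real.sqrt K) * ∑ j ∈ Finset.Icc 1 n, σ j := by
        apply mul_le_mul_of_nonneg_left _ (by positivity)
        have hre : ∑ i ∈ Finset.Icc 2 (p+1), ∑ j ∈ Finset.Icc (K*(i-2)+1) (K*(i-1)), σ j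
            = ∑ m ∈ Finset.range p, ∑ j ∈ Finset.Icc (K*m+1) (K*(m+1)), σ j := by
          have hmap : Finset.Icc 2 (p+1)
              = (Finset.range p).map ⟨fun m => m + 2, add_left_injective 2⟩ := by
            ext x
            simp only [Finset.mem_map, Finset.mem_Icc, Finset.mem_range,
              Function.Embedding.coeFn_mk]
            constructor
            · rintro ⟨h1, h2⟩; exact ⟨x - 2, by omega, by omega⟩
            · rintro ⟨m, hm, rfl⟩; omega
          rw [hmap, Finset.sum_map]
          apply Finset.sum_congr rfl
          intro m _
          simp only [Function.Embedding.coeFn_mk]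
          congr 2 <;> omega
        rw [hre, aux_block_sum]
        apply Finset.sum_le_sum_of_subset_of_nonneg
        · exact Finset.Icc_subset_Icc_right hKp
        · intro j hj _
          rw [Finset.mem_Icc] at hj
          exact hnonneg j hj.1 hj.2
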